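/- Let G = (V,E) be a finite simple graph, and suppose that for some k ≥ 1 there is a set U of size s such that removing U leaves components of size at most k. Then for any b ≥ s + k, a corrupt party with budget b has a strategy (corrupting U together with one component of the remaining graph, with appropriate reports) under which, for every vertex v ∈ V, there is a consistent assignment of identities with at most b corrupt nodes in which v is corrupt. Consequently m(G) ≤ min over k of (S_G(k) + k). -/

import Mathlib

open SimpleGraph

open SimpleGraph

/-- `U` is a `k`-vertex separator of `G`: every connected component of the
induced subgraph on the complement of `U` has at most `k` vertices. -/
def IsKSep {V : Type*} (G : SimpleGraph V) (U : Finset V) (k : ℕ) : Prop :=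
  ∀ c : (G.induce ((↑U : Set V)ᶜ)).ConnectedComponent, c.supp.ncard ≤ k

/-- `S_G(k)`: the minimum size of a `k`-vertex separator of `G`. -/
noncomputable def sepNum {V : Type*} [Fintype V] (G : SimpleGraph V) (k : ℕ) : ℕ :=
  sInf {s | ∃ U : Finset V, IsKSep G U k ∧ U.card = s}

/-- `min_{k ≥ 1} (S_G(k) + k)`. -/
noncomputable def minSep {V : Type*} [Fintype V] (G : SimpleGraph V) : ℕ :=
  sInf {x | ∃ k, 1 ≤ k ∧ x = sepNum G k + k}

/-- A configuration `f` (true = truthful, false = corrupt) is consistent with the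
reports `rep` if every truthful vertex reports the true type of each of its neighbors. -/
def Consistent {V : Type*} (G : SimpleGraph V) (f : V → Bool) (rep : V → V → Bool) : Prop :=
  ∀ u v : V, G.Adj u v → f u = true → rep u v = f v

/-- The number of corrupt vertices in a configuration. -/
noncomputable def badCount {V : Type*} (f : V → Bool) : ℕ :=
  {v : V | f v = false}.ncard

/-- `m(G)`: the minimum budget `b` for which the corrupt party has a placement of at most
`b` corrupt vertices and reports making it impossible to identify a single truthful vertex,
i.e. every vertex is corrupt in some configuration consistent with the reports that has
at most `b` corrupt vertices. -/
noncomputable def mNum {V : Type*} [Fintype V] (G : SimpleGraph V) : ℕ :=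
  sInf {b | ∃ rep : V → V → Bool, ∀ v : V, ∃ f : V → Bool,
    Consistent G f rep ∧ badCount f ≤ b ∧ f v = false}

lemma strat_aux {V : Type*} [Fintype V] (G : SimpleGraph V)
    (k s : ℕ) (U : Finset V) (hU : IsKSep G U k) (hs : U.card = s)
    (b : ℕ) (hb : s + k ≤ b) :
    ∃ rep : V → V → Bool, ∀ v : V, ∃ f : V → Bool,
      Consistent G f rep ∧ badCount f ≤ b ∧ f v = false := by
  classical
  refine ⟨fun _ w => decide (w ∉ U), fun v => ?_⟩
  by_cases hv : v ∈ U
  · refine ⟨fun w => decide (w ∉ U), ?_, ?_, by simp [hv]⟩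
    · intro u w _ hu
      rfl
    · have : {w : V | (decide (w ∉ U) : Bool) = false} = (↑U : Set V) := by
        ext w; simp
      rw [badCount, this]
      calc ((↑U : Set V)).ncard = U.card := by
            rw [Set.ncard_coe_finset]
        _ ≤ b := by omega
  · have hv' : v ∈ ((↑U : Set V)ᶜ) := by simpa using hv
    set C := (G.induce ((↑U : Set V)ᶜ)).connectedComponentMk ⟨v, hv'⟩ with hC
    refine ⟨fun w => if h : w ∈ ((↑U : Set V)ᶜ) then
        decide ((G.induce ((↑U : Set V)ᶜ)).connectedComponentMk ⟨w, h⟩ ≠ C) else false,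
        ?_, ?_, ?_⟩
    · intro u w hadj hu
      by_cases hu' : u ∈ ((↑U : Set V)ᶜ)
      · simp only [dif_pos hu', decide_eq_true_eq] at hu
        by_cases hw : w ∈ ((↑U : Set V)ᶜ)
        · have hadj' : (G.induce ((↑U : Set V)ᶜ)).Adj ⟨u, hu'⟩ ⟨w, hw⟩ := by
            simpa [SimpleGraph.comap] using hadj
          have : (G.induce ((↑U : Set V)ᶜ)).connectedComponentMk ⟨w, hw⟩
              = (G.induce ((↑U : Set V)ᶜ)).connectedComponentMk ⟨u, hu'⟩ :=
            SimpleGraph.ConnectedComponent.connectedComponentMk_eq_of_adj hadj'.symm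
          simp only [dif_pos hw, this]
          have hwU : w ∉ U := by simpa using hw
          simp [hwU, hu]
        · have hwU : w ∈ U := by simpa using hw
          simp [hwU, hw]
      · simp [hu'] at hu
    · have hsub : {w : V | (if h : w ∈ ((↑U : Set V)ᶜ) then
          decide ((G.induce ((↑U : Set V)ᶜ)).connectedComponentMk ⟨w, h⟩ ≠ C) else false)
          = false} ⊆ (↑U : Set V) ∪ (Subtype.val '' C.supp) := by
        intro w hw
        by_cases h : w ∈ ((↑U : Set V)ᶜ)
        · right
          simp only [Set.mem_setOf_eq, dif_pos h, decide_eq_false_iff_not, not_not] at hw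
          exact ⟨⟨w, h⟩, hw, rfl⟩
        · left; simpa using h
      have hle : badCount (fun w : V => if h : w ∈ ((↑U : Set V)ᶜ) then
          decide ((G.induce ((↑U : Set V)ᶜ)).connectedComponentMk ⟨w, h⟩ ≠ C) else false)
          ≤ ((↑U : Set V) ∪ (Subtype.val '' C.supp)).ncard :=
        Set.ncard_le_ncard hsub (Set.toFinite _)
      calc badCount _ ≤ ((↑U : Set V) ∪ (Subtype.val '' C.supp)).ncard := hle
        _ ≤ (↑U : Set V).ncard + (Subtype.val '' C.supp).ncard :=
            Set.ncard_union_le _ _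
        _ ≤ s + k := by
            have h1 : (↑U : Set V).ncard = s := by rw [Set.ncard_coe_finset, hs]
            have h2 : (Subtype.val '' C.supp).ncard = C.supp.ncard :=
              Set.ncard_image_of_injective _ Subtype.val_injective
            rw [h1, h2]
            exact Nat.add_le_add_left (hU C) s
        _ ≤ b := hb
    · simp [hv']; rfl

theorem corrupt_strategy_from_separator {V : Type*} [Fintype V] (G : SimpleGraph V)
    (k s : ℕ) (hk : 1 ≤ k) (U : Finset V) (hU : IsKSep G U k) (hs : U.card = s) :
    (∀ b : ℕ, s + k ≤ b → ∃ rep : V → V → Bool, ∀ v : V, ∃ f : V → Bool,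
      Consistent G f rep ∧ badCount f ≤ b ∧ f v = false) ∧
    mNum G ≤ minSep G := by
  constructor
  · exact fun b hb => strat_aux G k s U hU hs b hb
  · -- minSep is in its defining set
    have hne : {x | ∃ k, 1 ≤ k ∧ x = sepNum G k + k}.Nonempty :=
      ⟨sepNum G 1 + 1, 1, le_refl 1, rfl⟩
    obtain ⟨k₀, hk₀, hmin⟩ := Nat.sInf_mem hne
    have hsepne : {s | ∃ U : Finset V, IsKSep G U k₀ ∧ U.card = s}.Nonempty := by
      refine ⟨(Finset.univ : Finset V).card, Finset.univ, ?_, rfl⟩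
      intro c
      have : c.supp ⊆ Set.univ := Set.subset_univ _
      have hempty : c.supp = ∅ := by
        ext ⟨x, hx⟩
        simp at hx
      rw [hempty]
      simp
    obtain ⟨U₀, hU₀, hs₀⟩ := Nat.sInf_mem hsepne
    obtain ⟨rep, hrep⟩ := strat_aux G k₀ (sepNum G k₀) U₀ hU₀ hs₀ (sepNum G k₀ + k₀) le_rfl
    have : mNum G ≤ sepNum G k₀ + k₀ := Nat.sInf_le ⟨rep, hrep⟩
    rw [minSep, hmin] at *
    exact this
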